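/- Let V be a vector space of dimension k ≥ 2 over a finite field K with |K| = q, and let U_1, ..., U_{q+1} be proper subspaces covering V. Then at most one of the U_i has dimension ≤ k−2; equivalently, at least q of the U_i are hyperplanes (have dimension k−1). -/

import Mathlib

theorem stmt_3 (K V : Type*) [Field K] [Fintype K]
    [AddCommGroup V] [Module K V] [FiniteDimensional K V]
    (k : ℕ) (hk : 2 ≤ k) (hdim : Module.finrank K V = k)
    (U : Fin (Fintype.card K + 1) → Submodule K V)
    (hU : ∀ i, U i ≠ ⊤)
    (hcover : (⋃ i, (U i : Set V)) = Set.univ) :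
    ∀ i j, Module.finrank K (U i) ≤ k - 2 → Module.finrank K (U j) ≤ k - 2 → i = j := by
  classical
  haveI : Finite V := Module.finite_of_finite K
  haveI : Fintype V := Fintype.ofFinite V
  have hq2 : 2 ≤ Fintype.card K := Fintype.one_lt_card
  intro i j hi hj
  by_contra hij
  have hcardV : Fintype.card V = Fintype.card K ^ k := by
    rw [Module.card_eq_pow_finrank (K := K) (V := V), hdim]
  have hcardU : ∀ t, Fintype.card (U t) = Fintype.card K ^ (Module.finrank K (U t)) := fun t =>
    Module.card_eq_pow_finrank (K := K) (V := U t)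
  have hlt : ∀ t, Module.finrank K (U t) ≤ k - 1 := by
    intro t
    have h2 : Module.finrank K (U t) < Module.finrank K V :=
      Submodule.finrank_lt (hU t)
    omega
  set F : Fin (Fintype.card K + 1) → Finset V :=
    fun t => ((U t : Set V).toFinset.erase 0) with hF
  have hsub : Finset.univ.erase (0 : V) ⊆ Finset.univ.biUnion F := by
    intro x hx
    rw [Finset.mem_erase] at hx
    have hx2 : x ∈ ⋃ t, (U t : Set V) := by rw [hcover]; trivial
    obtain ⟨t, ht⟩ := Set.mem_iUnion.mp hx2
    exact Finset.mem_biUnion.mpr ⟨t, Finset.mem_univ _,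
      Finset.mem_erase.mpr ⟨hx.1, Set.mem_toFinset.mpr ht⟩⟩
  have hcardF : ∀ t, (F t).card = Fintype.card K ^ (Module.finrank K (U t)) - 1 := by
    intro t
    rw [hF]
    rw [Finset.card_erase_of_mem (Set.mem_toFinset.mpr (U t).zero_mem),
      Set.toFinset_card, ← hcardU t]
    congr 1
  have h1 : Fintype.card K ^ k - 1 ≤ ∑ t, (F t).card := by
    calc Fintype.card K ^ k - 1 = (Finset.univ.erase (0 : V)).card := by
          rw [Finset.card_erase_of_mem (Finset.mem_univ _), Finset.card_univ, hcardV]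
      _ ≤ (Finset.univ.biUnion F).card := Finset.card_le_card hsub
      _ ≤ ∑ t, (F t).card := Finset.card_biUnion_le
  have hjmem : j ∈ Finset.univ.erase i :=
    Finset.mem_erase.mpr ⟨fun h => hij h.symm, Finset.mem_univ j⟩
  have hsplit : ∑ t, (F t).card
      = (F i).card + ((F j).card + ∑ t ∈ (Finset.univ.erase i).erase j, (F t).card) := by
    rw [← Finset.add_sum_erase _ _ (Finset.mem_univ i), ← Finset.add_sum_erase _ _ hjmem]
  have hrest : ∑ t ∈ (Finset.univ.erase i).erase j, (F t).card
      ≤ (Fintype.card K - 1) * (Fintype.card K ^ (k - 1) - 1) := by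
    have hcard : ((Finset.univ.erase i).erase j).card = Fintype.card K - 1 := by
      rw [Finset.card_erase_of_mem hjmem,
        Finset.card_erase_of_mem (Finset.mem_univ i), Finset.card_univ, Fintype.card_fin]
      omega
    calc ∑ t ∈ (Finset.univ.erase i).erase j, (F t).card
        ≤ ((Finset.univ.erase i).erase j).card * (Fintype.card K ^ (k - 1) - 1) := by
          apply Finset.sum_le_card_nsmul
          intro t _
          rw [hcardF t]
          have h3 : Fintype.card K ^ Module.finrank K (U t) ≤ Fintype.card K ^ (k - 1) :=
            Nat.pow_le_pow_right (by omega) (hlt t)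
          omega
      _ = (Fintype.card K - 1) * (Fintype.card K ^ (k - 1) - 1) := by rw [hcard]
  have hsmall : ∀ t, Module.finrank K (U t) ≤ k - 2 →
      (F t).card ≤ Fintype.card K ^ (k - 2) - 1 := by
    intro t ht
    rw [hcardF t]
    have h4 : Fintype.card K ^ Module.finrank K (U t) ≤ Fintype.card K ^ (k - 2) :=
      Nat.pow_le_pow_right (by omega) ht
    omega
  have key : Fintype.card K ^ k - 1 ≤ (Fintype.card K ^ (k - 2) - 1) +
      ((Fintype.card K ^ (k - 2) - 1) +
        (Fintype.card K - 1) * (Fintype.card K ^ (k - 1) - 1)) := by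
    calc Fintype.card K ^ k - 1 ≤ ∑ t, (F t).card := h1
      _ = (F i).card + ((F j).card + ∑ t ∈ (Finset.univ.erase i).erase j, (F t).card) := hsplit
      _ ≤ _ := Nat.add_le_add (hsmall i hi) (Nat.add_le_add (hsmall j hj) hrest)
  obtain ⟨r, hr⟩ : ∃ r, Fintype.card K = r + 2 := ⟨Fintype.card K - 2, by omega⟩
  obtain ⟨m, rfl⟩ : ∃ m, k = m + 2 := ⟨k - 2, by omega⟩
  have e1 : m + 2 - 2 = m := by omega
  have e2 : m + 2 - 1 = m + 1 := by omega
  rw [hr, e1, e2] at key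
  have hm1 : 1 ≤ (r + 2) ^ m := Nat.one_le_pow _ _ (by omega)
  have hpm : (r + 2) ^ (m + 1) = (r + 2) ^ m * (r + 2) := pow_succ _ _
  have hpk : (r + 2) ^ (m + 2) = (r + 2) ^ m * (r + 2) * (r + 2) := by ring
  rw [hpm, hpk] at key
  set a := (r + 2) ^ m
  have h1b : 1 ≤ a * (r + 2) := Nat.le_mul_of_pos_right _ (by omega) |>.trans' hm1
  have h1c : 1 ≤ a * (r + 2) * (r + 2) := Nat.le_mul_of_pos_right _ (by omega) |>.trans' h1b
  have h1d : 1 ≤ r + 2 := by omega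
  zify [hm1, h1b, h1c, h1d] at key
  have ha : (1 : ℤ) ≤ (a : ℤ) := by exact_mod_cast hm1
  have hrr : (0 : ℤ) ≤ (r : ℤ) := Int.natCast_nonneg r
  nlinarith [key, ha, hrr, mul_nonneg hrr (sub_nonneg.mpr ha)]
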